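/- If Gθ has a floundered SLDF derivation D' with last resolvent F'₁,...,F'_k, and G has an SLDF derivation D using the same clause selection, then each F'_i is an instance of every atom in D corresponding to it (under the annotation correspondence). -/

import Mathlib

set_option autoImplicit false

namespace Flounder

/-- First-order terms over function symbols `F`, with natural-number variables. -/
inductive Trm (F : Type) : Type
  | var : ℕ → Trm F
  | app : F → List (Trm F) → Trm F

/-- Substitutions map variables to terms. -/
abbrev Subst (F : Type) := ℕ → Trm F

/-- Applying a substitution to a term. -/
def Trm.subst {F : Type} (θ : Subst F) : Trm F → Trm F
  | .var v => θ v
  | .app f ts => .app f (ts.attach.map (fun t => Trm.subst θ t.1))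
  decreasing_by
    have := List.sizeOf_lt_of_mem t.2
    simp only [Trm.app.sizeOf_spec] at *
    omega

/-- Composition of substitutions. -/
def Subst.comp {F : Type} (θ σ : Subst F) : Subst F := fun v => (θ v).subst σ

/-- The variable `v` occurs in the term. -/
inductive Trm.HasVar {F : Type} (v : ℕ) : Trm F → Prop
  | var : Trm.HasVar v (.var v)
  | app {f : F} {ts : List (Trm F)} {t : Trm F} :
      t ∈ ts → Trm.HasVar v t → Trm.HasVar v (.app f ts)

/-- The function symbol `f` occurs in the term. -/
inductive Trm.HasFunc {F : Type} (f : F) : Trm F → Prop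
  | head {ts : List (Trm F)} : Trm.HasFunc f (.app f ts)
  | arg {g : F} {ts : List (Trm F)} {t : Trm F} :
      t ∈ ts → Trm.HasFunc f t → Trm.HasFunc f (.app g ts)

def Trm.Ground {F : Type} (t : Trm F) : Prop := ∀ v, ¬ t.HasVar v

/-- All function symbols of the term belong to `Fp` (a "program term"). -/
def Trm.OnlyFuncs {F : Type} (Fp : Set F) (t : Trm F) : Prop := ∀ f, t.HasFunc f → f ∈ Fp

/-- The principal function symbol is extraneous (an "encoded variable"). -/
def EVarT {F : Type} (Fp : Set F) : Trm F → Prop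
  | .var _ => False
  | .app f _ => f ∉ Fp

/-- The term contains an extraneous function symbol (an "encoded non-ground term"). -/
def ENongroundT {F : Type} (Fp : Set F) (t : Trm F) : Prop := ∃ f, t.HasFunc f ∧ f ∉ Fp

/-- A renaming substitution: variables mapped injectively to variables. -/
def IsRenaming {F : Type} (ρ : Subst F) : Prop :=
  ∃ r : ℕ → ℕ, Function.Injective r ∧ ∀ v, ρ v = Trm.var (r v)

/-- Atoms: a predicate symbol applied to a list of terms. -/
structure Atom (P F : Type) where
  pred : P
  args : List (Trm F)

def Atom.subst {P F : Type} (θ : Subst F) (A : Atom P F) : Atom P F :=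
  ⟨A.pred, A.args.map (Trm.subst θ)⟩

def Atom.HasVar {P F : Type} (A : Atom P F) (v : ℕ) : Prop := ∃ t ∈ A.args, t.HasVar v
def Atom.Ground {P F : Type} (A : Atom P F) : Prop := ∀ v, ¬ A.HasVar v
def Atom.OnlyFuncs {P F : Type} (Fp : Set F) (A : Atom P F) : Prop :=
  ∀ t ∈ A.args, t.OnlyFuncs Fp

/-- `B` is an instance of `A`. -/
def Atom.Instance {P F : Type} (A B : Atom P F) : Prop := ∃ σ : Subst F, B = A.subst σ
def Atom.Variant {P F : Type} (A B : Atom P F) : Prop := A.Instance B ∧ B.Instance A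

def UnifiesA {P F : Type} (θ : Subst F) (A B : Atom P F) : Prop := A.subst θ = B.subst θ
/-- Most general unifier of two atoms: a unifier through which every unifier factors. -/
def IsMGUA {P F : Type} (θ : Subst F) (A B : Atom P F) : Prop :=
  UnifiesA θ A B ∧ ∀ η, UnifiesA η A B → ∃ σ, η = θ.comp σ

/-- Definite clauses. -/
structure Clause (P F : Type) where
  head : Atom P F
  body : List (Atom P F)

def Clause.subst {P F : Type} (θ : Subst F) (c : Clause P F) : Clause P F :=
  ⟨c.head.subst θ, c.body.map (Atom.subst θ)⟩
def Clause.HasVar {P F : Type} (c : Clause P F) (v : ℕ) : Prop :=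
  c.head.HasVar v ∨ ∃ B ∈ c.body, B.HasVar v
def Clause.Ground {P F : Type} (c : Clause P F) : Prop :=
  c.head.Ground ∧ ∀ B ∈ c.body, B.Ground
def Clause.OnlyFuncs {P F : Type} (Fp : Set F) (c : Clause P F) : Prop :=
  c.head.OnlyFuncs Fp ∧ ∀ B ∈ c.body, B.OnlyFuncs Fp

/-- Annotations record the list of (clause, body position) pairs by which an atom was
introduced; `none` marks the top-level goal ("clause 0"). -/
abbrev Ann (P F : Type) := List (Option (Clause P F) × ℕ)

/-- Annotated goals. -/
abbrev AGoal (P F : Type) := List (Atom P F × Ann P F)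

def initGoal {P F : Type} (G : List (Atom P F)) : AGoal P F :=
  G.zipIdx.map fun p => (p.1, [(none, p.2 + 1)])

def AGoal.HasVar {P F : Type} (g : AGoal P F) (v : ℕ) : Prop := ∃ a ∈ g, a.1.HasVar v
def AGoal.inst {P F : Type} (θ : Subst F) (g : AGoal P F) : AGoal P F :=
  g.map fun a => (a.1.subst θ, a.2)

/-- The annotated body of a clause variant `c` (with original clause `c₀`), inserted
in place of a selected atom with annotation `ann`. -/
def annBody {P F : Type} (c c₀ : Clause P F) (ann : Ann P F) : AGoal P F :=
  c.body.zipIdx.map fun p => (p.1, (some c₀, p.2 + 1) :: ann)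

/-- SLD(F) derivations of length `n` from goal `g0` with program `prog`, where only
atoms in the callable set `C` may be selected (SLD resolution: `C = Set.univ`).
`raw i` is the `i`-th goal with atoms as introduced (not yet instantiated), and
`sub i` is the composition of the mgus of the first `i` steps; the actual `i`-th
resolvent is `raw i` instantiated by `sub i`.  Clause variants are renamed apart. -/
structure Derivation (P F : Type) (prog : Set (Clause P F)) (C : Set (Atom P F))
    (g0 : AGoal P F) (n : ℕ) where
  raw : ℕ → AGoal P F
  sub : ℕ → Subst F
  orig : ℕ → Clause P F
  cl : ℕ → Clause P F
  mgu : ℕ → Subst F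
  selAtom : ℕ → Atom P F
  selAnn : ℕ → Ann P F
  hraw0 : raw 0 = g0
  hsub0 : sub 0 = fun v => Trm.var v
  horig : ∀ i < n, orig i ∈ prog
  hvariant : ∀ i < n, ∃ ρ, IsRenaming ρ ∧ cl i = (orig i).subst ρ
  hfresh : ∀ i < n, ∀ v, (cl i).HasVar v →
      (∀ j ≤ i, ¬ AGoal.HasVar (raw j) v) ∧ sub i v = Trm.var v ∧
        ∀ u, ¬ Trm.HasVar v (sub i u)
  hstep : ∀ i < n, ∃ pre post, raw i = pre ++ ((selAtom i, selAnn i) :: post) ∧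
      (selAtom i).subst (sub i) ∈ C ∧
      IsMGUA (mgu i) ((selAtom i).subst (sub i)) (cl i).head ∧
      raw (i + 1) = pre ++ annBody (cl i) (orig i) (selAnn i) ++ post
  hsubs : ∀ i < n, sub (i + 1) = (sub i).comp (mgu i)

namespace Derivation

variable {P F : Type} {prog : Set (Clause P F)} {C : Set (Atom P F)} {g0 : AGoal P F} {n : ℕ}

/-- The `i`-th resolvent. -/
def resolvent (D : Derivation P F prog C g0 n) (i : ℕ) : AGoal P F :=
  AGoal.inst (D.sub i) (D.raw i)

/-- The atoms of the `i`-th resolvent. -/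
def resAtoms (D : Derivation P F prog C g0 n) (i : ℕ) : List (Atom P F) :=
  (D.resolvent i).map Prod.fst

def rawAtoms (D : Derivation P F prog C g0 n) (i : ℕ) : List (Atom P F) :=
  (D.raw i).map Prod.fst

def Successful (D : Derivation P F prog C g0 n) : Prop := D.raw n = []

/-- Floundered: the last resolvent is nonempty and none of its atoms is callable. -/
def Floundered (D : Derivation P F prog C g0 n) : Prop :=
  D.raw n ≠ [] ∧ ∀ a ∈ D.resolvent n, a.1 ∉ C

/-- The composed answer substitution of the derivation. -/
def answer (D : Derivation P F prog C g0 n) : Subst F := D.sub n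

end Derivation

/-- Two derivations use the same clause selection: corresponding selected atoms
(equal annotations) are resolved with the same program clause. -/
def SameSelection {P F : Type} {prog prog' : Set (Clause P F)} {C C' : Set (Atom P F)}
    {g0 g0' : AGoal P F} {n n' : ℕ}
    (D : Derivation P F prog C g0 n) (D' : Derivation P F prog' C' g0' n') : Prop :=
  ∀ i < n, ∀ i' < n', D.selAnn i = D'.selAnn i' → D.orig i = D'.orig i'

/-- The answer substitution is a renaming on the variables of goal `G`. -/
def RenamingOnGoal {P F : Type} (G : List (Atom P F)) (θ : Subst F) : Prop :=
  (∀ v, (∃ A ∈ G, A.HasVar v) → ∃ u, θ v = Trm.var u) ∧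
  (∀ v w, (∃ A ∈ G, A.HasVar v) → (∃ A ∈ G, A.HasVar w) → v ≠ w → θ v ≠ θ w)

/-- Goal-level instance (one substitution applied throughout). -/
def GoalInst {P F : Type} (g h : List (Atom P F)) : Prop :=
  ∃ σ : Subst F, h = g.map (Atom.subst σ)

/-- `m` is a most general common instance of `g₁` and `g₂`. -/
def MGIGoal {P F : Type} (g₁ g₂ m : List (Atom P F)) : Prop :=
  GoalInst g₁ m ∧ GoalInst g₂ m ∧
    ∀ m', GoalInst g₁ m' → GoalInst g₂ m' → GoalInst m m'

/-! ## Delay declarations -/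

/-- Delay conditions over `n` argument positions, built from `var`, `nonground`,
conjunction and disjunction. -/
inductive DCond : ℕ → Type
  | var {n : ℕ} : Fin n → DCond n
  | nonground {n : ℕ} : Fin n → DCond n
  | conj {n : ℕ} : DCond n → DCond n → DCond n
  | disj {n : ℕ} : DCond n → DCond n → DCond n

/-- Concrete (procedural) truth of a delay condition. -/
def DCond.holds {F : Type} {n : ℕ} (args : Fin n → Trm F) : DCond n → Prop
  | DCond.var i => ∃ v, args i = Trm.var v
  | DCond.nonground i => ¬ Trm.Ground (args i)
  | DCond.conj c d => DCond.holds args c ∧ DCond.holds args d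
  | DCond.disj c d => DCond.holds args c ∨ DCond.holds args d

structure DelayDecl (P : Type) where
  pred : P
  arity : ℕ
  cond : DCond arity

/-- A program with delay declarations. -/
structure DProg (P F : Type) where
  prog : Set (Clause P F)
  delays : Set (DelayDecl P)

/-- An atom matches some delay declaration whose condition holds. -/
def Delayed {P F : Type} (dp : DProg P F) (A : Atom P F) : Prop :=
  ∃ d ∈ dp.delays, d.pred = A.pred ∧ ∃ h : A.args.length = d.arity,
    DCond.holds (fun i => A.args.get (Fin.cast h.symm i)) d.cond

/-- The callable atom set induced by the delay declarations. -/
def Callable {P F : Type} (dp : DProg P F) : Set (Atom P F) := {A | ¬ Delayed dp A}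

/-- A nonempty goal all of whose atoms are delayed. -/
def ImmFloundered {P F : Type} (dp : DProg P F) (G : List (Atom P F)) : Prop :=
  G ≠ [] ∧ ∀ A ∈ G, Delayed dp A

/-! ## The SF transformation -/

/-- Predicates of `SF(P)`: the original predicates plus `evar/1` and `enonground/1`. -/
inductive SPred (P : Type) : Type
  | orig : P → SPred P
  | evar : SPred P
  | enonground : SPred P

def Atom.mapPred {P Q F : Type} (f : P → Q) (A : Atom P F) : Atom Q F := ⟨f A.pred, A.args⟩
def Clause.mapPred {P Q F : Type} (f : P → Q) (c : Clause P F) : Clause Q F :=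
  ⟨c.head.mapPred f, c.body.map (Atom.mapPred f)⟩

/-- Disjunctive normal form of a delay condition: a list of conjunctions of
literals `(i, true)` (= var) and `(i, false)` (= nonground). -/
def DCond.dnf {n : ℕ} : DCond n → List (List (Fin n × Bool))
  | DCond.var i => [[(i, true)]]
  | DCond.nonground i => [[(i, false)]]
  | DCond.conj c d => (DCond.dnf c).flatMap (fun a => (DCond.dnf d).map (fun b => a ++ b))
  | DCond.disj c d => DCond.dnf c ++ DCond.dnf d

/-- The delay clauses `A :- C'` added for the delay declarations (conditions
translated to `evar`/`enonground` calls, one clause per DNF disjunct). -/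
def declClauses {P F : Type} (dp : DProg P F) : Set (Clause (SPred P) F) :=
  { c | ∃ d ∈ dp.delays, ∃ conj ∈ DCond.dnf d.cond,
      c = ⟨⟨SPred.orig d.pred, (List.range d.arity).map Trm.var⟩,
           conj.map (fun p =>
             ⟨if p.2 then SPred.evar else SPred.enonground, [Trm.var (p.1 : ℕ)]⟩)⟩ }

/-- The infinite fact set defining `evar/1`. -/
def evarFacts (P : Type) {F : Type} (Fp : Set F) : Set (Clause (SPred P) F) :=
  { c | ∃ t : Trm F, t.Ground ∧ EVarT Fp t ∧ c = ⟨⟨SPred.evar, [t]⟩, []⟩ }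

/-- The infinite fact set defining `enonground/1`. -/
def engFacts (P : Type) {F : Type} (Fp : Set F) : Set (Clause (SPred P) F) :=
  { c | ∃ t : Trm F, t.Ground ∧ ENongroundT Fp t ∧ c = ⟨⟨SPred.enonground, [t]⟩, []⟩ }

/-- All delay clauses: those for the declarations plus the `evar`/`enonground` facts. -/
def delayClausesAll {P F : Type} (Fp : Set F) (dp : DProg P F) : Set (Clause (SPred P) F) :=
  declClauses dp ∪ evarFacts P Fp ∪ engFacts P Fp

/-- The transformed program `SF(P)`. -/
def SFprog {P F : Type} (Fp : Set F) (dp : DProg P F) : Set (Clause (SPred P) F) :=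
  (Clause.mapPred SPred.orig '' dp.prog) ∪ delayClausesAll Fp dp

/-- The (ground) success set of a program: ground atoms with successful SLD
derivations. -/
def SS {P F : Type} (prog : Set (Clause P F)) : Set (Atom P F) :=
  { A | A.Ground ∧ ∃ n, ∃ D : Derivation P F prog Set.univ (initGoal [A]) n, D.Successful }

/-- The non-ground flounder set: program atoms with floundered derivations whose
floundered computed answer substitution is a renaming (empty). -/
def NFS {P F : Type} (Fp : Set F) (prog : Set (Clause P F)) (C : Set (Atom P F)) :
    Set (Atom P F) :=
  { A | A.OnlyFuncs Fp ∧ ∃ n, ∃ D : Derivation P F prog C (initGoal [A]) n,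
        D.Floundered ∧ RenamingOnGoal [A] (D.sub n) }

/-- `A` is a ground encoding of `B`: distinct variables of `B` are replaced by
distinct ground terms with extraneous principal function symbols. -/
def Encodes {P F : Type} (Fp : Set F) (B A : Atom P F) : Prop :=
  ∃ σ : Subst F, A = B.subst σ ∧
    (∀ v, B.HasVar v → (σ v).Ground ∧ EVarT Fp (σ v)) ∧
    (∀ v w, B.HasVar v → B.HasVar w → v ≠ w → σ v ≠ σ w)

/-- The encoded flounder set. -/
def EFS {P F : Type} (Fp : Set F) (prog : Set (Clause P F)) (C : Set (Atom P F)) :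
    Set (Atom P F) :=
  { A | ∃ B ∈ NFS Fp prog C, Encodes Fp B A }

/-- The computed answer binds each variable of `G` either to a variable or to a
ground term with extraneous principal function symbol, injectively. -/
def ExtrAnswer {P F : Type} (Fp : Set F) (G : List (Atom P F)) (θ : Subst F) : Prop :=
  (∀ v, (∃ A ∈ G, A.HasVar v) →
      (∃ u, θ v = Trm.var u) ∨ ((θ v).Ground ∧ EVarT Fp (θ v))) ∧
  (∀ v w, (∃ A ∈ G, A.HasVar v) → (∃ A ∈ G, A.HasVar w) → v ≠ w → θ v ≠ θ w)

/-! ## Proof trees and the flagged immediate consequence operator -/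

/-- `Proof prog A n`: the ground atom `A` has an SLD proof tree of height ≤ `n`. -/
inductive Proof {P F : Type} (prog : Set (Clause P F)) : Atom P F → ℕ → Prop
  | node {c : Clause P F} {γ : Subst F} {m : ℕ} :
      c ∈ prog → (Clause.subst γ c).Ground →
      (∀ B ∈ (Clause.subst γ c).body, Proof prog B m) →
      Proof prog (Clause.subst γ c).head (m + 1)
  | succ {A : Atom P F} {m : ℕ} : Proof prog A m → Proof prog A (m + 1)

/-- `ProofD prog S A n`: proof tree of height ≤ `n` using at least one clause from `S`. -/
inductive ProofD {P F : Type} (prog S : Set (Clause P F)) : Atom P F → ℕ → Prop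
  | here {c : Clause P F} {γ : Subst F} {m : ℕ} :
      c ∈ prog → c ∈ S → (Clause.subst γ c).Ground →
      (∀ B ∈ (Clause.subst γ c).body, Proof prog B m) →
      ProofD prog S (Clause.subst γ c).head (m + 1)
  | there {c : Clause P F} {γ : Subst F} {m : ℕ} {B : Atom P F} :
      c ∈ prog → (Clause.subst γ c).Ground →
      (∀ B' ∈ (Clause.subst γ c).body, Proof prog B' m) →
      B ∈ (Clause.subst γ c).body → ProofD prog S B m →
      ProofD prog S (Clause.subst γ c).head (m + 1)
  | succ {A : Atom P F} {m : ℕ} : ProofD prog S A m → ProofD prog S A (m + 1)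

/-- The standard immediate consequence operator. -/
def Tp {P F : Type} (prog : Set (Clause P F)) (I : Set (Atom P F)) : Set (Atom P F) :=
  { A | ∃ c ∈ prog, ∃ γ : Subst F, (Clause.subst γ c).Ground ∧
        (Clause.subst γ c).head = A ∧ ∀ B ∈ (Clause.subst γ c).body, B ∈ I }

/-- f-interpretations: a set of ground atoms, some flagged. -/
structure FInterp (P F : Type) where
  atoms : Set (Atom P F)
  flagged : Set (Atom P F)

/-- The flagged immediate consequence operator `T^f_P`. -/
def Tf {P F : Type} (Fp : Set F) (dp : DProg P F) (I : FInterp (SPred P) F) :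
    FInterp (SPred P) F where
  atoms := Tp (SFprog Fp dp) I.atoms
  flagged := { A | A ∈ Tp (SFprog Fp dp) I.atoms ∧
      (A.pred = SPred.evar ∨ A.pred = SPred.enonground ∨
       ∃ c ∈ SFprog Fp dp, ∃ γ : Subst F, (Clause.subst γ c).Ground ∧
         (Clause.subst γ c).head = A ∧
         (∀ B ∈ (Clause.subst γ c).body, B ∈ I.atoms) ∧
         ∃ B ∈ (Clause.subst γ c).body, B ∈ I.flagged) }

/-- Iterates `T^f_P ↑ n`. -/
def TfIter {P F : Type} (Fp : Set F) (dp : DProg P F) : ℕ → FInterp (SPred P) F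
  | 0 => ⟨∅, ∅⟩
  | m + 1 => Tf Fp dp (TfIter Fp dp m)

/-- `T^f_P ↑ ω`. -/
def TfOmega {P F : Type} (Fp : Set F) (dp : DProg P F) : FInterp (SPred P) F :=
  ⟨⋃ m, (TfIter Fp dp m).atoms, ⋃ m, (TfIter Fp dp m).flagged⟩

set_option linter.dupNamespace false
variable {P F : Type}

theorem Trm.subst_app (θ : Subst F) (f : F) (ts : List (Trm F)) :
    Trm.subst θ (.app f ts) = .app f (ts.map (Trm.subst θ)) := by
  rw [Trm.subst]
  congr 1
  simp [List.attach_map_subtype_val]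

theorem Trm.subst_var' (θ : Subst F) (v : ℕ) : Trm.subst θ (.var v) = θ v := by
  rw [Trm.subst]

theorem Trm.subst_subst (σ δ : Subst F) : ∀ t : Trm F,
    Trm.subst δ (Trm.subst σ t) = Trm.subst (Subst.comp σ δ) t
  | .var v => by simp [Trm.subst_var', Subst.comp]
  | .app f ts => by
    simp only [Trm.subst_app, List.map_map]
    congr 1
    refine List.map_congr_left ?_
    intro t ht
    exact Trm.subst_subst σ δ t
  termination_by t => sizeOf t
  decreasing_by
    have := List.sizeOf_lt_of_mem ht
    simp only [Trm.app.sizeOf_spec] at *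
    omega

theorem Trm.subst_congr (σ σ' : Subst F) : ∀ t : Trm F,
    (∀ v, t.HasVar v → σ v = σ' v) → Trm.subst σ t = Trm.subst σ' t
  | .var v => fun h => by simp [Trm.subst_var', h v Trm.HasVar.var]
  | .app f ts => fun h => by
    simp only [Trm.subst_app]
    congr 1
    refine List.map_congr_left ?_
    intro t ht
    exact Trm.subst_congr σ σ' t (fun v hv => h v (Trm.HasVar.app ht hv))
  termination_by t => sizeOf t
  decreasing_by
    have := List.sizeOf_lt_of_mem ht
    simp only [Trm.app.sizeOf_spec] at *
    omega

theorem Trm.subst_idvar : ∀ t : Trm F, Trm.subst (fun v => Trm.var v) t = t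
  | .var v => by simp [Trm.subst_var']
  | .app f ts => by
    simp only [Trm.subst_app]
    congr 1
    conv_rhs => rw [← List.map_id ts]
    refine List.map_congr_left ?_
    intro t ht
    exact Trm.subst_idvar t
  termination_by t => sizeOf t
  decreasing_by
    have := List.sizeOf_lt_of_mem ht
    simp only [Trm.app.sizeOf_spec] at *
    omega

theorem Trm.hasVar_subst {σ : Subst F} {v : ℕ} : ∀ (t : Trm F),
    (Trm.subst σ t).HasVar v → ∃ u, t.HasVar u ∧ (σ u).HasVar v
  | .var u => fun h => ⟨u, Trm.HasVar.var, by rwa [Trm.subst_var'] at h⟩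
  | .app f ts => fun h => by
    rw [Trm.subst_app] at h
    cases h with
    | app hmem hv =>
      obtain ⟨t₀, ht₀, rfl⟩ := List.mem_map.1 hmem
      obtain ⟨u, hu1, hu2⟩ := Trm.hasVar_subst t₀ hv
      exact ⟨u, Trm.HasVar.app ht₀ hu1, hu2⟩
  termination_by t => sizeOf t
  decreasing_by
    have := List.sizeOf_lt_of_mem ht₀
    simp only [Trm.app.sizeOf_spec] at *
    omega

theorem Trm.hasVar_subst_of {σ : Subst F} {v u : ℕ} {t : Trm F}
    (h : t.HasVar u) (h2 : (σ u).HasVar v) : (Trm.subst σ t).HasVar v := by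
  induction h with
  | var => rwa [Trm.subst_var']
  | app hmem _ ih =>
    rw [Trm.subst_app]
    exact Trm.HasVar.app (List.mem_map_of_mem hmem) ih

theorem Atom.subst_subst (σ δ : Subst F) (A : Atom P F) :
    (A.subst σ).subst δ = A.subst (Subst.comp σ δ) := by
  simp only [Atom.subst, List.map_map, Atom.mk.injEq, true_and]
  refine List.map_congr_left ?_
  intro t _; exact Trm.subst_subst σ δ t

theorem Atom.subst_congr {σ σ' : Subst F} (A : Atom P F)
    (h : ∀ v, A.HasVar v → σ v = σ' v) : A.subst σ = A.subst σ' := by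
  simp only [Atom.subst, Atom.mk.injEq, true_and]
  refine List.map_congr_left ?_
  intro t ht
  exact Trm.subst_congr σ σ' t (fun v hv => h v ⟨t, ht, hv⟩)

theorem Atom.subst_idvar (A : Atom P F) : A.subst (fun v => Trm.var v) = A := by
  obtain ⟨p, args⟩ := A
  simp only [Atom.subst, Atom.mk.injEq, true_and]
  conv_rhs => rw [← List.map_id args]
  exact List.map_congr_left (fun t _ => Trm.subst_idvar t)

theorem Atom.subst_fix {σ : Subst F} (A : Atom P F)
    (h : ∀ v, A.HasVar v → σ v = Trm.var v) : A.subst σ = A := by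
  rw [Atom.subst_congr A h, Atom.subst_idvar]

theorem Atom.hasVar_subst {σ : Subst F} {v : ℕ} {A : Atom P F}
    (h : (A.subst σ).HasVar v) : ∃ u, A.HasVar u ∧ (σ u).HasVar v := by
  obtain ⟨t, ht, hv⟩ := h
  simp only [Atom.subst, List.mem_map] at ht
  obtain ⟨t₀, ht₀, rfl⟩ := ht
  obtain ⟨u, hu1, hu2⟩ := Trm.hasVar_subst t₀ hv
  exact ⟨u, ⟨t₀, ht₀, hu1⟩, hu2⟩

theorem Atom.hasVar_subst_of {σ : Subst F} {v u : ℕ} {A : Atom P F}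
    (h : A.HasVar u) (h2 : (σ u).HasVar v) : (A.subst σ).HasVar v := by
  obtain ⟨t, ht, hv⟩ := h
  exact ⟨t.subst σ, List.mem_map_of_mem ht, Trm.hasVar_subst_of hv h2⟩

/-- Variables of a clause obtained by renaming: each is `r u` for some var `u`. -/
theorem Clause.hasVar_subst {σ : Subst F} {v : ℕ} {c : Clause P F}
    (h : (c.subst σ).HasVar v) : ∃ u, c.HasVar u ∧ (σ u).HasVar v := by
  rcases h with h | ⟨B, hB, hv⟩
  · obtain ⟨u, hu, h2⟩ := Atom.hasVar_subst h
    exact ⟨u, Or.inl hu, h2⟩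
  · simp only [Clause.subst, List.mem_map] at hB
    obtain ⟨B₀, hB₀, rfl⟩ := hB
    obtain ⟨u, hu, h2⟩ := Atom.hasVar_subst hv
    exact ⟨u, Or.inr ⟨B₀, hB₀, hu⟩, h2⟩

/-- The annotations of an annotated goal. -/
def anns (g : AGoal P F) : List (Ann P F) := g.map Prod.snd

theorem mem_annBody_iff {c c₀ : Clause P F} {ann : Ann P F} {A : Atom P F} {ann' : Ann P F} :
    (A, ann') ∈ annBody c c₀ ann ↔ ∃ m, c.body[m]? = some A ∧ ann' = (some c₀, m + 1) :: ann := by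
  unfold annBody
  rw [List.mem_map]
  constructor
  · rintro ⟨p, hp, heq⟩
    rw [List.mem_zipIdx_iff_getElem?] at hp
    obtain ⟨h1, h2⟩ := Prod.mk.injEq .. ▸ heq
    exact ⟨p.2, by rw [hp, h1], h2.symm⟩
  · rintro ⟨m, hm, rfl⟩
    exact ⟨(A, m), List.mem_zipIdx_iff_getElem?.2 hm, rfl⟩

theorem anns_annBody (c c₀ : Clause P F) (ann : Ann P F) :
    anns (annBody c c₀ ann) = (List.range c.body.length).map (fun m => (some c₀, m + 1) :: ann) := by
  unfold anns annBody
  rw [List.map_map, List.range_eq_range', ← List.zipIdx_map_snd 0 c.body, List.map_map]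
  rfl

theorem mem_initGoal_iff {G : List (Atom P F)} {A : Atom P F} {ann : Ann P F} :
    (A, ann) ∈ initGoal G ↔ ∃ k, G[k]? = some A ∧ ann = [(none, k + 1)] := by
  unfold initGoal
  rw [List.mem_map]
  constructor
  · rintro ⟨p, hp, heq⟩
    rw [List.mem_zipIdx_iff_getElem?] at hp
    obtain ⟨h1, h2⟩ := Prod.mk.injEq .. ▸ heq
    exact ⟨p.2, by rw [hp, h1], h2.symm⟩
  · rintro ⟨k, hk, rfl⟩
    exact ⟨(A, k), List.mem_zipIdx_iff_getElem?.2 hk, rfl⟩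

namespace Derivation

variable {prog : Set (Clause P F)} {C : Set (Atom P F)} {g0 : AGoal P F} {n : ℕ}
variable (D : Derivation P F prog C g0 n)

theorem sel_mem {i : ℕ} (hi : i < n) : (D.selAtom i, D.selAnn i) ∈ D.raw i := by
  obtain ⟨pre, post, h1, -⟩ := D.hstep i hi
  rw [h1]
  simp

/-- Origin: every annotated atom in a resolvent is from the initial goal or
introduced by a step. -/
theorem mem_raw_origin : ∀ j, j ≤ n → ∀ A ann, (A, ann) ∈ D.raw j →
    (A, ann) ∈ g0 ∨ ∃ i, i < j ∧ ∃ m, (D.cl i).body[m]? = some A ∧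
      ann = (some (D.orig i), m + 1) :: D.selAnn i := by
  intro j
  induction j with
  | zero => intro _ A ann h; exact Or.inl (D.hraw0 ▸ h)
  | succ j ih =>
    intro hj A ann h
    have hjn : j < n := lt_of_lt_of_le (Nat.lt_succ_self j) hj
    obtain ⟨pre, post, h1, -, -, h2⟩ := D.hstep j hjn
    rw [h2] at h
    simp only [List.append_assoc, List.mem_append] at h
    rcases h with h | h | h
    · rcases ih (le_of_lt hjn) A ann (by rw [h1]; simp [h]) with h' | ⟨i, hi, rest⟩
      · exact Or.inl h'
      · exact Or.inr ⟨i, Nat.lt_succ_of_lt hi, rest⟩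
    · obtain ⟨m, hm, rfl⟩ := mem_annBody_iff.1 h
      exact Or.inr ⟨j, Nat.lt_succ_self j, m, hm, rfl⟩
    · rcases ih (le_of_lt hjn) A ann (by rw [h1]; simp [h]) with h' | ⟨i, hi, rest⟩
      · exact Or.inl h'
      · exact Or.inr ⟨i, Nat.lt_succ_of_lt hi, rest⟩

/-- Persistence: an annotated atom persists to the next resolvent unless selected. -/
theorem persist {i : ℕ} (hi : i < n) {A : Atom P F} {ann : Ann P F}
    (h : (A, ann) ∈ D.raw i) :
    (A, ann) ∈ D.raw (i + 1) ∨ (A, ann) = (D.selAtom i, D.selAnn i) := by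
  obtain ⟨pre, post, h1, -, -, h2⟩ := D.hstep i hi
  rw [h1] at h
  simp only [List.mem_append, List.mem_cons] at h
  rcases h with h | h | h
  · exact Or.inl (by rw [h2]; simp [h])
  · exact Or.inr h
  · exact Or.inl (by rw [h2]; simp [h])

/-- Persistence of an annotation to the end, unless selected in between. -/
theorem persist_to : ∀ i, i ≤ n → ∀ {A : Atom P F} {ann : Ann P F},
    (A, ann) ∈ D.raw i →
    (A, ann) ∈ D.raw n ∨ ∃ k, i ≤ k ∧ k < n ∧ D.selAnn k = ann := by
  intro i hi A ann h
  rcases Nat.lt_or_ge i n with hlt | hge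
  · rcases D.persist hlt h with h' | h'
    · rcases persist_to (i + 1) (Nat.succ_le_of_lt hlt) h' with h'' | ⟨k, hk1, hk2, hk3⟩
      · exact Or.inl h''
      · exact Or.inr ⟨k, le_trans (Nat.le_succ i) hk1, hk2, hk3⟩
    · exact Or.inr ⟨i, le_refl i, hlt, congrArg Prod.snd h'.symm⟩
  · have : i = n := le_antisymm hi hge
    exact Or.inl (this ▸ h)
  termination_by i => n - i

/-- Factorization of later substitutions through earlier ones. -/
theorem subFactor {a b : ℕ} (hab : a ≤ b) (hb : b ≤ n) :
    ∃ κ : Subst F, D.sub b = Subst.comp (D.sub a) κ := by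
  induction b, hab using Nat.le_induction with
  | base => exact ⟨fun v => Trm.var v, funext fun v => (Trm.subst_idvar _).symm⟩
  | succ b hab ih =>
    obtain ⟨κ, hκ⟩ := ih (le_of_lt (Nat.lt_of_succ_le hb))
    refine ⟨Subst.comp κ (D.mgu b), funext fun v => ?_⟩
    rw [D.hsubs b (Nat.lt_of_succ_le hb)]
    show (D.sub b v).subst (D.mgu b) = _
    rw [hκ]
    show ((D.sub a v).subst κ).subst (D.mgu b) = (D.sub a v).subst (Subst.comp κ (D.mgu b))
    exact Trm.subst_subst κ (D.mgu b) (D.sub a v)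

end Derivation

namespace Derivation

variable {prog : Set (Clause P F)} {C : Set (Atom P F)} {g0 : AGoal P F} {n : ℕ}
variable (D : Derivation P F prog C g0 n)

theorem annInv (H0 : (anns g0).Nodup)
    (H1 : ∀ s ∈ anns g0, ∀ t ∈ anns g0, t <:+ s → t = s) :
    ∀ k, k ≤ n → (anns (D.raw k)).Nodup ∧
      ∀ j, j ≤ k → ∀ s ∈ anns (D.raw j), ∀ t ∈ anns (D.raw k), t <:+ s → t = s := by
  intro k
  induction k with
  | zero =>
    intro _
    rw [D.hraw0]
    refine ⟨H0, fun j hj => ?_⟩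
    have : j = 0 := Nat.le_zero.1 hj
    subst this
    rw [D.hraw0]
    exact H1
  | succ k ih =>
    intro hk1
    have hkn : k < n := Nat.lt_of_succ_le hk1
    obtain ⟨hnod, hsuf⟩ := ih (le_of_lt hkn)
    obtain ⟨pre, post, h1, hCc, hmg, h2⟩ := D.hstep k hkn
    set s₀ := D.selAnn k with hs₀
    have e1 : anns (D.raw k) = anns pre ++ s₀ :: anns post := by
      rw [h1]; simp [anns]
    have e2 : anns (D.raw (k + 1)) =
        anns pre ++ ((List.range (D.cl k).body.length).map
          (fun m => (some (D.orig k), m + 1) :: s₀) ++ anns post) := by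
      rw [h2]
      show (pre ++ annBody (D.cl k) (D.orig k) s₀ ++ post).map Prod.snd = _
      rw [List.map_append, List.map_append]
      rw [show (annBody (D.cl k) (D.orig k) s₀).map Prod.snd
            = anns (annBody (D.cl k) (D.orig k) s₀) from rfl, anns_annBody]
      simp [anns]
    have s₀mem : s₀ ∈ anns (D.raw k) := by rw [e1]; simp
    have holdk : ∀ t, t ∈ anns pre ∨ t ∈ anns post → t ∈ anns (D.raw k) := by
      intro t ht
      rw [e1]
      rcases ht with h | h
      · simp [h]
      · simp [h]
    have hnotnew : ∀ (c : Option (Clause P F)) (m : ℕ), ((c, m + 1) :: s₀) ∉ anns (D.raw k) := by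
      intro c m hmem
      have := hsuf k le_rfl ((c, m + 1) :: s₀) hmem s₀ s₀mem (List.suffix_cons _ _)
      exact List.cons_ne_self _ _ this.symm
    constructor
    · -- Nodup
      rw [e2]
      rw [e1] at hnod
      rw [List.nodup_append] at hnod ⊢
      obtain ⟨hnp, hncons, hdisj⟩ := hnod
      rw [List.nodup_cons] at hncons
      refine ⟨hnp, ?_, ?_⟩
      · rw [List.nodup_append]
        refine ⟨?_, hncons.2, ?_⟩
        · refine List.Nodup.map ?_ List.nodup_range
          intro a b hab
          simpa using hab
        · intro t ht b hpost htb
          subst htb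
          obtain ⟨m, -, rfl⟩ := List.mem_map.1 ht
          exact hnotnew _ _ (holdk _ (Or.inr hpost))
      · intro t htpre b ht2 htb
        subst htb
        rw [List.mem_append] at ht2
        rcases ht2 with ht2 | ht2
        · obtain ⟨m, -, rfl⟩ := List.mem_map.1 ht2
          exact hnotnew _ _ (holdk _ (Or.inl htpre))
        · exact hdisj t htpre t (List.mem_cons_of_mem _ ht2) rfl
    · -- Suffix property
      intro j hj s hs t ht hts
      have lenlem : ∀ (c : Option (Clause P F)) (m : ℕ) (u : Ann P F),
          ¬ ((c, m + 1) :: u <:+ u) := by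
        intro c m u hcon
        have := List.IsSuffix.length_le hcon
        simp at this
      have hs₀notold : s₀ ∉ anns pre ∧ s₀ ∉ anns post := by
        have hnod' := hnod
        rw [e1, List.nodup_append, List.nodup_cons] at hnod'
        exact ⟨fun h => hnod'.2.2 _ h _ (by simp) rfl, hnod'.2.1.1⟩
      have split : ∀ x : Ann P F, x ∈ anns (D.raw (k + 1)) →
          (x ∈ anns pre ∨ x ∈ anns post) ∨ ∃ m, x = (some (D.orig k), m + 1) :: s₀ := by
        intro x hx
        rw [e2] at hx
        simp only [List.mem_append, List.mem_map, List.mem_range] at hx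
        rcases hx with hx | ⟨m, -, hxeq⟩ | hx
        · exact Or.inl (Or.inl hx)
        · exact Or.inr ⟨m, hxeq.symm⟩
        · exact Or.inl (Or.inr hx)
      rcases split t ht with htold | ⟨m, rfl⟩
      · -- t old
        have htk : t ∈ anns (D.raw k) := holdk t htold
        rcases Nat.lt_or_ge j (k + 1) with hjk | hjk
        · exact hsuf j (Nat.lt_succ_iff.1 hjk) s hs t htk hts
        · have hj' : j = k + 1 := le_antisymm hj hjk
          subst hj'
          rcases split s hs with hsold | ⟨m', rfl⟩
          · exact hsuf k le_rfl s (holdk s hsold) t htk hts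
          · rcases List.suffix_cons_iff.1 hts with heq | hts'
            · exact heq
            · have h4 := hsuf k le_rfl s₀ s₀mem t htk hts'
              subst h4
              rcases htold with h | h
              · exact absurd h hs₀notold.1
              · exact absurd h hs₀notold.2
      · -- t new
        rcases Nat.lt_or_ge j (k + 1) with hjk | hjk
        · have h3 := hsuf j (Nat.lt_succ_iff.1 hjk) s hs s₀ s₀mem
            (List.IsSuffix.trans (List.suffix_cons _ _) hts)
          exact absurd (h3 ▸ hts) (lenlem _ _ _)
        · have hj' : j = k + 1 := le_antisymm hj hjk
          subst hj'
          rcases split s hs with hsold | ⟨m', rfl⟩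
          · have h3 := hsuf k le_rfl s (holdk s hsold) s₀ s₀mem
              (List.IsSuffix.trans (List.suffix_cons _ _) hts)
            exact absurd (h3 ▸ hts) (lenlem _ _ _)
          · exact List.IsSuffix.eq_of_length hts (by simp)

/-- A selected annotation never occurs in any later resolvent. -/
theorem noReturn (H0 : (anns g0).Nodup)
    (H1 : ∀ s ∈ anns g0, ∀ t ∈ anns g0, t <:+ s → t = s)
    {k₀ : ℕ} (hk₀ : k₀ < n) :
    ∀ k, k₀ < k → k ≤ n → D.selAnn k₀ ∉ anns (D.raw k) := by
  intro k
  induction k with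
  | zero => omega
  | succ k ih =>
    intro hk1 hk2 hmem
    have hkn : k < n := Nat.lt_of_succ_le hk2
    obtain ⟨pre, post, h1, -, -, h2⟩ := D.hstep k hkn
    have e2 : anns (D.raw (k + 1)) =
        anns pre ++ ((List.range (D.cl k).body.length).map
          (fun m => (some (D.orig k), m + 1) :: D.selAnn k) ++ anns post) := by
      rw [h2]
      show (pre ++ annBody (D.cl k) (D.orig k) (D.selAnn k) ++ post).map Prod.snd = _
      rw [List.map_append, List.map_append]
      rw [show (annBody (D.cl k) (D.orig k) (D.selAnn k)).map Prod.snd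
            = anns (annBody (D.cl k) (D.orig k) (D.selAnn k)) from rfl, anns_annBody]
      simp [anns]
    have e1 : anns (D.raw k) = anns pre ++ D.selAnn k :: anns post := by
      rw [h1]; simp [anns]
    rw [e2] at hmem
    simp only [List.mem_append, List.mem_map, List.mem_range] at hmem
    have hQ := D.annInv H0 H1 k (le_of_lt hkn)
    rcases Nat.lt_or_ge k₀ k with hlt | hge
    · -- k₀ < k : use ih
      have hnot : D.selAnn k₀ ∉ anns (D.raw k) := ih hlt (le_of_lt hkn)
      rcases hmem with h | ⟨m, -, hnew⟩ | h
      · exact hnot (by rw [e1]; simp [h])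
      · -- selAnn k₀ = (c, m+1) :: selAnn k, so selAnn k <:+ selAnn k₀ properly
        have hsel0 : D.selAnn k₀ ∈ anns (D.raw k₀) := by
          obtain ⟨pre0, post0, h10, -⟩ := D.hstep k₀ hk₀
          rw [h10]; simp [anns]
        have hselk : D.selAnn k ∈ anns (D.raw k) := by rw [e1]; simp
        have := hQ.2 k₀ (le_of_lt hlt) (D.selAnn k₀) hsel0 (D.selAnn k) hselk
          (by rw [← hnew]; exact List.suffix_cons _ _)
        exact hnot (this ▸ hselk)
      · exact hnot (by rw [e1]; simp [h])
    · -- k₀ = k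
      have hk₀k : k₀ = k := le_antisymm (Nat.lt_succ_iff.1 hk1) hge
      subst hk₀k
      rcases hmem with h | ⟨m, -, hnew⟩ | h
      · -- selAnn k₀ ∈ anns pre: contradicts nodup at k₀
        have := hQ.1
        rw [e1, List.nodup_append, List.nodup_cons] at this
        exact this.2.2 _ h _ (by simp) rfl
      · exact List.cons_ne_self _ _ hnew
      · have := hQ.1
        rw [e1, List.nodup_append, List.nodup_cons] at this
        exact this.2.1.1 h

/-- Each annotation is selected at most once. -/
theorem selOnce (H0 : (anns g0).Nodup)
    (H1 : ∀ s ∈ anns g0, ∀ t ∈ anns g0, t <:+ s → t = s)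
    {i₀ i₁ : ℕ} (h0 : i₀ < n) (h1 : i₁ < n) (hlt : i₀ < i₁)
    (heq : D.selAnn i₀ = D.selAnn i₁) : False := by
  have hmem : D.selAnn i₁ ∈ anns (D.raw i₁) := by
    obtain ⟨pre, post, hd, -⟩ := D.hstep i₁ h1
    rw [hd]; simp [anns]
  exact D.noReturn H0 H1 h0 i₁ hlt (le_of_lt h1) (heq ▸ hmem)

end Derivation

theorem initGoal_anns (L : List (Atom P F)) :
    anns (initGoal L) = (List.range L.length).map (fun k => [((none : Option (Clause P F)), k + 1)]) := by
  unfold anns initGoal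
  rw [List.map_map, List.range_eq_range', ← List.zipIdx_map_snd 0 L, List.map_map]
  rfl

theorem initGoal_anns_nodup (L : List (Atom P F)) : (anns (initGoal L)).Nodup := by
  rw [initGoal_anns]
  refine List.Nodup.map ?_ List.nodup_range
  intro a b hab
  simpa using hab

theorem initGoal_anns_suffix (L : List (Atom P F)) :
    ∀ s ∈ anns (initGoal L), ∀ t ∈ anns (initGoal L), t <:+ s → t = s := by
  intro s hs t ht hts
  rw [initGoal_anns] at hs ht
  obtain ⟨a, -, rfl⟩ := List.mem_map.1 hs
  obtain ⟨b, -, rfl⟩ := List.mem_map.1 ht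
  exact List.IsSuffix.eq_of_length hts rfl

/-- atoms of the last resolvent of a floundered derivation of an instance
goal are instances of all corresponding atoms of a derivation of the goal with the same
clause selection. -/
theorem floundered_atoms_instances {P F : Type} (prog : Set (Clause P F))
    (C : Set (Atom P F))
    (hC : forall (A : Atom P F) (sigma : Subst F), A ∈ C -> A.subst sigma ∈ C)
    (G : List (Atom P F)) (theta : Subst F) (n' n : ℕ)
    (D' : Derivation P F prog C (initGoal (G.map (Atom.subst theta))) n')
    (hF : D'.Floundered)
    (D : Derivation P F prog C (initGoal G) n)
    (hsel : SameSelection D' D) :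
    forall a', a' ∈ D'.resolvent n' -> forall j, j ≤ n -> forall a, a ∈ D.resolvent j ->
      a.2 = a'.2 -> Atom.Instance a.1 a'.1 := by
  classical
  have H0' : (anns (initGoal (G.map (Atom.subst theta)))).Nodup := initGoal_anns_nodup _
  have H1' := initGoal_anns_suffix (G.map (Atom.subst theta))
  -- The main invariant, by induction on the length of the prefix of `D`.
  have main : ∀ j, j ≤ n →
      (∀ i₀, i₀ < j → ∃ i'', i'' < n' ∧ D'.selAnn i'' = D.selAnn i₀) ∧
      ∃ τ : Subst F, ∀ A ann, (A, ann) ∈ D.raw j → ∀ i'', i'' ≤ n' →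
        ∀ A', (A', ann) ∈ D'.raw i'' →
          A'.subst (D'.sub n') = (A.subst (D.sub j)).subst τ := by
    intro j
    induction j with
    | zero =>
      intro _
      refine ⟨fun i₀ h => absurd h (Nat.not_lt_zero _), Subst.comp theta (D'.sub n'), ?_⟩
      intro A ann hmem i'' hi'' A' hmem'
      rw [D.hraw0] at hmem
      obtain ⟨k, hGk, rfl⟩ := mem_initGoal_iff.1 hmem
      rcases D'.mem_raw_origin i'' hi'' A' _ hmem' with hinit | ⟨i₀, -, m, -, hbad⟩
      · obtain ⟨k', hGk', hkk⟩ := mem_initGoal_iff.1 hinit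
        have hk : k = k' := by simpa using hkk
        subst hk
        rw [List.getElem?_map, hGk] at hGk'
        have hA' : A' = A.subst theta := by simpa using hGk'.symm
        subst hA'
        rw [D.hsub0, Atom.subst_idvar, Atom.subst_subst]
      · simp at hbad
    | succ j ih =>
      intro hj1
      have hjn : j < n := Nat.lt_of_succ_le hj1
      obtain ⟨J, τ, I⟩ := ih (le_of_lt hjn)
      obtain ⟨pre, post, hsplit, hScall, hmgu, hnext⟩ := D.hstep j hjn
      obtain ⟨ρ, ⟨r, hrinj, hrv⟩, hclj⟩ := D.hvariant j hjn
      set sAnn := D.selAnn j with hsAnndef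
      set aS := D.selAtom j with haSdef
      set c₀ := D.orig j with hc₀def
      have haSmem : (aS, sAnn) ∈ D.raw j := D.sel_mem hjn
      -- Step A: find the step of D' selecting the same annotation.
      have stepA : ∃ i', i' < n' ∧ D'.selAnn i' = sAnn := by
        -- first : sAnn occurs (with some atom) at some stage of D'
        have hocc : ∃ i₁, i₁ ≤ n' ∧ ∃ Ax, (Ax, sAnn) ∈ D'.raw i₁ := by
          rcases D.mem_raw_origin j (le_of_lt hjn) aS sAnn haSmem with hinit | ⟨i₀, hi₀, m, hbody, hann⟩
          · obtain ⟨k, hGk, hannk⟩ := mem_initGoal_iff.1 hinit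
            refine ⟨0, Nat.zero_le _, aS.subst theta, ?_⟩
            rw [D'.hraw0]
            refine mem_initGoal_iff.2 ⟨k, ?_, hannk⟩
            rw [List.getElem?_map, hGk]
            rfl
          · have hi₀n : i₀ < n := lt_trans hi₀ hjn
            obtain ⟨i₂, hi₂, hsel₂⟩ := J i₀ hi₀
            have horig₂ : D'.orig i₂ = D.orig i₀ := hsel i₂ hi₂ i₀ hi₀n hsel₂
            obtain ⟨ρ₂, ⟨r₂, -, -⟩, hcl₂⟩ := D'.hvariant i₂ hi₂
            obtain ⟨pre₂, post₂, -, -, -, hnext₂⟩ := D'.hstep i₂ hi₂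
            -- m is within the body of D'.cl i₂
            have hmlt : m < (D'.cl i₂).body.length := by
              have h1 : m < (D.cl i₀).body.length := (List.getElem?_eq_some_iff.1 hbody).1
              obtain ⟨ρ₃, -, hcl₃⟩ := D.hvariant i₀ hi₀n
              rw [hcl₃] at h1
              rw [hcl₂, horig₂]
              simpa [Clause.subst] using h1
            obtain ⟨Ax, hAx⟩ : ∃ Ax, (D'.cl i₂).body[m]? = some Ax :=
              ⟨_, List.getElem?_eq_getElem hmlt⟩
            refine ⟨i₂ + 1, Nat.succ_le_of_lt hi₂, Ax, ?_⟩
            rw [hnext₂]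
            have : (Ax, (some (D'.orig i₂), m + 1) :: D'.selAnn i₂) ∈
                annBody (D'.cl i₂) (D'.orig i₂) (D'.selAnn i₂) :=
              mem_annBody_iff.2 ⟨m, hAx, rfl⟩
            rw [hann, ← horig₂, ← hsel₂]
            simp only [List.append_assoc, List.mem_append]
            exact Or.inr (Or.inl this)
        obtain ⟨i₁, hi₁, Ax, hAx⟩ := hocc
        rcases D'.persist_to i₁ hi₁ hAx with hfin | ⟨k', hk'1, hk'2, hk'3⟩
        · -- contradiction with floundering
          exfalso
          have hval : Ax.subst (D'.sub n') = (aS.subst (D.sub j)).subst τ :=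
            I aS sAnn haSmem n' le_rfl Ax hfin
          have hmemres : (Ax.subst (D'.sub n'), sAnn) ∈ D'.resolvent n' := by
            unfold Derivation.resolvent AGoal.inst
            exact List.mem_map.2 ⟨(Ax, sAnn), hfin, rfl⟩
          exact hF.2 _ hmemres (hval ▸ hC _ τ hScall)
        · exact ⟨k', hk'2, hk'3⟩
      obtain ⟨i', hi', hseli'⟩ := stepA
      -- Data of D' at step i'
      have horig' : D'.orig i' = c₀ := hsel i' hi' j hjn hseli'
      obtain ⟨ρ', hρ'ren, hcl'⟩ := D'.hvariant i' hi'
      obtain ⟨pre', post', hsplit', -, hmgu', -⟩ := D'.hstep i' hi'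
      have hA'Smem : (D'.selAtom i', sAnn) ∈ D'.raw i' := by
        have h := D'.sel_mem hi'
        rwa [hseli'] at h
      set A'S := D'.selAtom i' with hA'Sdef
      have hstar : A'S.subst (D'.sub n') = (aS.subst (D.sub j)).subst τ :=
        I aS sAnn haSmem i' (le_of_lt hi') A'S hA'Smem
      obtain ⟨κ₂, hκ₂⟩ := D'.subFactor (Nat.succ_le_of_lt hi') le_rfl
      have hsubN : D'.sub n' = Subst.comp (Subst.comp (D'.sub i') (D'.mgu i')) κ₂ := by
        rw [hκ₂, D'.hsubs i' hi']
      -- freshness for step j of D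
      have hfr := D.hfresh j hjn
      have hfr' := D'.hfresh i' hi'
      -- the unifier η
      have ufor : ∀ v, (D.cl j).HasVar v → ∃ u, r u = v := by
        intro v hv
        rw [hclj] at hv
        obtain ⟨u, -, h2⟩ := Clause.hasVar_subst hv
        rw [hrv u] at h2
        cases h2
        exact ⟨u, rfl⟩
      set η : Subst F := fun v =>
        if h : (D.cl j).HasVar v then (ρ' (Classical.choose (ufor v h))).subst (D'.sub n')
        else τ v with hηdef
      have ηspec1 : ∀ v, ¬ (D.cl j).HasVar v → η v = τ v := by
        intro v hv; simp only [hηdef, dif_neg hv]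
      have ηspec2 : ∀ u, (D.cl j).HasVar (r u) → η (r u) = (ρ' u).subst (D'.sub n') := by
        intro u hu
        simp only [hηdef, dif_pos hu]
        have := Classical.choose_spec (ufor (r u) hu)
        rw [hrinj this]
      -- substituted old atoms contain no variables of cl j
      have oldsubst : ∀ (B : Atom P F), (B.subst (D.sub j)).subst η = (B.subst (D.sub j)).subst τ := by
        intro B
        refine Atom.subst_congr _ ?_
        intro v hv
        obtain ⟨w, -, h2⟩ := Atom.hasVar_subst hv
        by_cases hcv : (D.cl j).HasVar v
        · exact absurd h2 ((hfr v hcv).2.2 w)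
        · exact ηspec1 v hcv
      -- congruence for clause-variable substitution
      have clcong : ∀ (B₀ : Atom P F), B₀ ∈ c₀.head :: c₀.body →
          (B₀.subst ρ).subst η = (B₀.subst ρ').subst (D'.sub n') := by
        intro B₀ hB₀
        rw [Atom.subst_subst, Atom.subst_subst]
        refine Atom.subst_congr _ ?_
        intro u hu
        have hclvar : (D.cl j).HasVar (r u) := by
          rw [hclj]
          have harg : (B₀.subst ρ).HasVar (r u) :=
            Atom.hasVar_subst_of hu (by rw [hrv]; exact Trm.HasVar.var)
          rcases List.mem_cons.1 hB₀ with rfl | hmem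
          · exact Or.inl harg
          · exact Or.inr ⟨B₀.subst ρ, List.mem_map_of_mem hmem, harg⟩
        show (ρ u).subst η = (ρ' u).subst (D'.sub n')
        rw [hrv u, Trm.subst_var']
        exact ηspec2 u hclvar
      -- η unifies S and the head of cl j
      have hsubN' : ∀ B : Atom P F, B.subst (D'.sub n')
          = ((B.subst (D'.sub i')).subst (D'.mgu i')).subst κ₂ := by
        intro B
        rw [hsubN, ← Atom.subst_subst, ← Atom.subst_subst]
      have hηunif : UnifiesA η (aS.subst (D.sub j)) (D.cl j).head := by
        unfold UnifiesA
        rw [oldsubst aS, ← hstar]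
        have hH'fix : (D'.cl i').head.subst (D'.sub i') = (D'.cl i').head :=
          Atom.subst_fix _ (fun v hv => (hfr' v (Or.inl hv)).2.1)
        have hu : (A'S.subst (D'.sub i')).subst (D'.mgu i')
            = ((D'.cl i').head).subst (D'.mgu i') := hmgu'.1
        have hA'val : A'S.subst (D'.sub n') = (D'.cl i').head.subst (D'.sub n') := by
          rw [hsubN' A'S, hsubN' (D'.cl i').head, hu, hH'fix]
        rw [hA'val]
        have hhead : (D.cl j).head = c₀.head.subst ρ := by rw [hclj]; rfl
        have hhead' : (D'.cl i').head = c₀.head.subst ρ' := by rw [hcl', horig']; rfl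
        rw [hhead, hhead', clcong c₀.head List.mem_cons_self]
      obtain ⟨δ, hδ⟩ := hmgu.2 η hηunif
      ----------------------------------------------------------------
      refine ⟨?_, δ, ?_⟩
      · intro i₀ hi₀
        rcases Nat.lt_or_ge i₀ j with h | h
        · exact J i₀ h
        · have : i₀ = j := le_antisymm (Nat.lt_succ_iff.1 hi₀) h
          subst this
          exact ⟨i', hi', hseli'⟩
      · intro A ann hmem i'' hi'' A' hmem'
        have hsubj1 : ∀ B : Atom P F, B.subst (D.sub (j + 1)) = (B.subst (D.sub j)).subst (D.mgu j) := by
          intro B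
          rw [D.hsubs j hjn, ← Atom.subst_subst]
        have oldgoal : (A, ann) ∈ D.raw j →
            A'.subst (D'.sub n') = (A.subst (D.sub (j + 1))).subst δ := by
          intro hmemj
          calc A'.subst (D'.sub n') = (A.subst (D.sub j)).subst τ :=
                I A ann hmemj i'' hi'' A' hmem'
            _ = (A.subst (D.sub j)).subst η := (oldsubst A).symm
            _ = ((A.subst (D.sub j)).subst (D.mgu j)).subst δ := by
                rw [hδ, ← Atom.subst_subst]
            _ = (A.subst (D.sub (j + 1))).subst δ := by rw [hsubj1]
        rw [hnext] at hmem
        simp only [List.append_assoc, List.mem_append] at hmem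
        rcases hmem with hmem | hmem | hmem
        · exact oldgoal (by rw [hsplit]; simp only [List.mem_append, List.mem_cons]; tauto)
        · -- new atom
          obtain ⟨m, hm, rfl⟩ := mem_annBody_iff.1 hmem
          rcases D'.mem_raw_origin i'' hi'' A' _ hmem' with hinit | ⟨i₀, hi₀, m₂, hbody₂, hann₂⟩
          · obtain ⟨k, -, hbad⟩ := mem_initGoal_iff.1 hinit
            simp at hbad
          · have hcons := hann₂
            rw [List.cons.injEq] at hcons
            obtain ⟨hpair, htail⟩ := hcons
            rw [Prod.mk.injEq] at hpair
            obtain ⟨hcl₀, hm₂⟩ := hpair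
            have hm₂' : m₂ = m := by omega
            rw [hm₂'] at hbody₂
            have hselAnn₀ : D'.selAnn i₀ = D'.selAnn i' := by rw [← htail, hseli']
            have hi₀n' : i₀ < n' := lt_of_lt_of_le hi₀ hi''
            have hii : i₀ = i' := by
              rcases lt_trichotomy i₀ i' with h | h | h
              · exact (D'.selOnce H0' H1' hi₀n' hi' h hselAnn₀).elim
              · exact h
              · exact (D'.selOnce H0' H1' hi' hi₀n' h hselAnn₀.symm).elim
            subst hii
            rw [hcl', horig'] at hbody₂
            have hbody₂' : (c₀.body.map (Atom.subst ρ'))[m]? = some A' := hbody₂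
            rw [List.getElem?_map] at hbody₂'
            rw [hclj] at hm
            have hm' : (c₀.body.map (Atom.subst ρ))[m]? = some A := hm
            rw [List.getElem?_map] at hm'
            obtain ⟨B₀, hB₀, hB₀'⟩ : ∃ B₀, c₀.body[m]? = some B₀ ∧ A = B₀.subst ρ := by
              cases hcb : c₀.body[m]? with
              | none => rw [hcb] at hm'; simp at hm'
              | some B₀ =>
                rw [hcb] at hm'
                exact ⟨B₀, rfl, by simpa using hm'.symm⟩
            have hA' : A' = B₀.subst ρ' := by
              rw [hB₀] at hbody₂'
              simpa using hbody₂'.symm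
            have hAmemcl : A ∈ (D.cl j).body := by
              rw [hclj]
              have h2 := (List.getElem?_eq_some_iff.1 hm).2
              rw [← h2]
              exact List.getElem_mem _
            have hAfix : A.subst (D.sub j) = A :=
              Atom.subst_fix _ (fun v hv => (hfr v (Or.inr ⟨A, hAmemcl, hv⟩)).2.1)
            have hB₀mem : B₀ ∈ c₀.head :: c₀.body := by
              refine List.mem_cons_of_mem _ ?_
              have h2 := (List.getElem?_eq_some_iff.1 hB₀).2
              rw [← h2]
              exact List.getElem_mem _
            calc A'.subst (D'.sub n') = (B₀.subst ρ').subst (D'.sub n') := by rw [hA']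
              _ = (B₀.subst ρ).subst η := (clcong B₀ hB₀mem).symm
              _ = A.subst η := by rw [hB₀']
              _ = (A.subst (D.mgu j)).subst δ := by rw [hδ, ← Atom.subst_subst]
              _ = ((A.subst (D.sub j)).subst (D.mgu j)).subst δ := by rw [hAfix]
              _ = (A.subst (D.sub (j + 1))).subst δ := by rw [hsubj1]
        · exact oldgoal (by rw [hsplit]; simp only [List.mem_append, List.mem_cons]; tauto)
  -- conclude
  intro a' ha' j hj a ha hann
  unfold Derivation.resolvent AGoal.inst at ha' ha
  obtain ⟨⟨A', annA'⟩, hA'mem, hA'eq⟩ := List.mem_map.1 ha'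
  obtain ⟨⟨A, annA⟩, hAmem, hAeq⟩ := List.mem_map.1 ha
  obtain ⟨-, τ, I⟩ := main j hj
  subst hA'eq
  subst hAeq
  have h2 : annA = annA' := by simpa using hann
  subst h2
  exact ⟨τ, by simpa using I A annA hAmem n' le_rfl A' hA'mem⟩
end Flounder
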